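/- Let n ≥ 1 and let A_0, …, A_n be (possibly unbounded) linear operators in the complex Hilbert space H. Define the operator polynomial T(λ) := Σ_{k=0}^n λ^k A_k with dom T(λ) := ⋂_{k=0}^n dom A_k, for λ ∈ ℂ. If 0 ∉ closure(W(A_n)), then W_Ψ(T) ⊆ closure(W(T)). -/

import Mathlib

noncomputable section

variable {H : Type*} [NormedAddCommGroup H] [InnerProductSpace ℂ H] [CompleteSpace H]

local notation "⟪" x ", " y "⟫" => @inner ℂ _ _ x y

/-- The numerical range of a single (possibly unbounded) linear operator `S`,
`W(S) = {⟨Sf, f⟩ : f ∈ dom S, ‖f‖ = 1}` (the paper's inner product `⟨u, v⟩` is linear in `u`,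
i.e. it is Mathlib's `⟪v, u⟫`). -/
def opNumRange (S : H →ₗ.[ℂ] H) : Set ℂ :=
  {z | ∃ f : S.domain, ‖(f : H)‖ = 1 ∧ ⟪(f : H), S f⟫ = z}

private lemma norm_multiset_prod' (s : Multiset ℂ) :
    ‖s.prod‖ = (s.map fun x => ‖x‖).prod := by
  induction s using Multiset.induction with
  | empty => simp
  | cons a s ih => simp [norm_mul, ih]

private lemma pow_card_le_prod' (s : Multiset ℝ) (c : ℝ) (hc : 0 ≤ c)
    (h : ∀ x ∈ s, c ≤ x) : c ^ Multiset.card s ≤ s.prod := by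
  induction s using Multiset.induction with
  | empty => simp
  | cons a s ih =>
    simp only [Multiset.card_cons, Multiset.prod_cons, pow_succ, mul_comm]
    have ha : c ≤ a := h a (Multiset.mem_cons_self a s)
    have hs : c ^ Multiset.card s ≤ s.prod :=
      ih fun x hx => h x (Multiset.mem_cons_of_mem hx)
    calc c * c ^ Multiset.card s ≤ a * s.prod := by
          apply mul_le_mul ha hs (by positivity) (le_trans hc ha)
    _ = a * s.prod := rfl

/-- For the operator polynomial `T(λ) = ∑_{k=0}^n λ^k A_k` with
`dom T(λ) = ⋂_k dom A_k`: if `0 ∉ closure W(A_n)`, then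
`W_Ψ(T) ⊆ closure W(T)`, where `W_Ψ(T) = {λ : 0 ∈ closure {⟨T(λ)f,f⟩ : f ∈ dom T(λ), ‖f‖=1}}`
and `W(T) = {λ : ∃ f ∈ dom T(λ), ‖f‖ = 1, ⟨T(λ)f, f⟩ = 0}`. -/
theorem polynomial_pseudoNumRange_subset_closure_numRange
    (n : ℕ) (hn : 1 ≤ n) (A : Fin (n + 1) → (H →ₗ.[ℂ] H))
    (hAn : (0 : ℂ) ∉ closure (opNumRange (A (Fin.last n)))) :
    {l : ℂ | (0 : ℂ) ∈ closure {z : ℂ | ∃ (f : H) (hf : ∀ k, f ∈ (A k).domain),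
        ‖f‖ = 1 ∧ z = ∑ k : Fin (n + 1), l ^ (k : ℕ) * ⟪f, (A k) ⟨f, hf k⟩⟫}} ⊆
      closure {l : ℂ | ∃ (f : H) (hf : ∀ k, f ∈ (A k).domain),
        ‖f‖ = 1 ∧ ∑ k : Fin (n + 1), l ^ (k : ℕ) * ⟪f, (A k) ⟨f, hf k⟩⟫ = 0} := by
  intro l hl
  simp only [Set.mem_setOf_eq] at hl
  rw [Metric.mem_closure_iff] at hl ⊢
  have hδ : ∃ δ > (0:ℝ), ∀ w ∈ opNumRange (A (Fin.last n)), δ ≤ ‖w‖ := by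
    by_contra h
    push_neg at h
    apply hAn
    rw [Metric.mem_closure_iff]
    intro ε hε
    obtain ⟨w, hw, hwlt⟩ := h ε hε
    exact ⟨w, hw, by simpa [dist_eq_norm] using hwlt⟩
  obtain ⟨δ, hδpos, hδ⟩ := hδ
  intro ε hε
  obtain ⟨z, hz, hzlt⟩ := hl (δ * ε ^ n) (by positivity)
  obtain ⟨f, hf, hfnorm, hzeq⟩ := hz
  set a : Fin (n + 1) → ℂ := fun k => ⟪f, A k ⟨f, hf k⟩⟫ with ha
  have han : δ ≤ ‖a (Fin.last n)‖ := hδ _ ⟨⟨f, hf _⟩, hfnorm, rfl⟩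
  have hanne : a (Fin.last n) ≠ 0 := by
    intro h
    rw [h, norm_zero] at han
    linarith
  set p : Polynomial ℂ := ∑ k : Fin (n + 1), Polynomial.C (a k) * Polynomial.X ^ (k : ℕ)
    with hp
  have hcoeffn : p.coeff n = a (Fin.last n) := by
    rw [hp, Polynomial.finset_sum_coeff]
    rw [Finset.sum_eq_single (Fin.last n)]
    · simp
    · intro k _ hk
      have hne : (k : ℕ) ≠ n := by
        intro h
        exact hk (Fin.ext (by simp [h]))
      simp only [Polynomial.coeff_C_mul, Polynomial.coeff_X_pow]
      rw [if_neg (fun h => hne h.symm), mul_zero]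
    · simp
  have hdegle : p.natDegree ≤ n := by
    apply Polynomial.natDegree_sum_le_of_forall_le
    intro k _
    refine (Polynomial.natDegree_C_mul_le _ _).trans ?_
    simpa using Fin.is_le k
  have hdeg : p.natDegree = n :=
    le_antisymm hdegle (Polynomial.le_natDegree_of_ne_zero (hcoeffn ▸ hanne))
  have hlead : p.leadingCoeff = a (Fin.last n) := by
    rw [Polynomial.leadingCoeff, hdeg, hcoeffn]
  have hcard : Multiset.card p.roots = n := by
    rw [← hdeg]
    exact Polynomial.splits_iff_card_roots.mp (IsAlgClosed.splits p)
  have heval : ∀ μ : ℂ, p.eval μ = ∑ k : Fin (n + 1), μ ^ (k : ℕ) * a k := by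
    intro μ
    rw [hp, Polynomial.eval_finset_sum]
    refine Finset.sum_congr rfl fun k _ => ?_
    rw [Polynomial.eval_mul, Polynomial.eval_C, Polynomial.eval_pow, Polynomial.eval_X,
      mul_comm]
  have hprodeq : p.eval l = a (Fin.last n) * (p.roots.map fun r => l - r).prod := by
    conv_lhs => rw [Polynomial.Splits.eq_prod_roots (IsAlgClosed.splits p)]
    rw [hlead, Polynomial.eval_mul, Polynomial.eval_C, Polynomial.eval_multiset_prod,
      Multiset.map_map]
    simp
  have hevalz : p.eval l = z := by rw [heval l, hzeq]
  have hznorm : ‖z‖ < δ * ε ^ n := by simpa [dist_eq_norm] using hzlt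
  have hnormprod : ‖a (Fin.last n)‖ * ((p.roots.map fun r => l - r).map fun x => ‖x‖).prod
      < δ * ε ^ n := by
    calc ‖a (Fin.last n)‖ * ((p.roots.map fun r => l - r).map fun x => ‖x‖).prod
        = ‖p.eval l‖ := by rw [hprodeq, norm_mul, norm_multiset_prod']
      _ = ‖z‖ := by rw [hevalz]
      _ < δ * ε ^ n := hznorm
  have hroot : ∃ r ∈ p.roots, ‖l - r‖ < ε := by
    by_contra h
    push_neg at h
    have hge : ε ^ n ≤ ((p.roots.map fun r => l - r).map fun x => ‖x‖).prod := by
      have := pow_card_le_prod' (((p.roots.map fun r => l - r)).map fun x => ‖x‖) ε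
        (le_of_lt hε) ?_
      · simpa [hcard] using this
      · intro x hx
        simp only [Multiset.mem_map] at hx
        obtain ⟨y, hy, rfl⟩ := hx
        obtain ⟨r, hr, rfl⟩ := hy
        exact h r hr
    have : δ * ε ^ n ≤ ‖a (Fin.last n)‖ *
        ((p.roots.map fun r => l - r).map fun x => ‖x‖).prod :=
      mul_le_mul han hge (by positivity) (norm_nonneg _)
    linarith
  obtain ⟨r, hr, hrlt⟩ := hroot
  have hpne : p ≠ 0 := fun h => hanne (by rw [← hcoeffn, h, Polynomial.coeff_zero])
  have hproot : p.eval r = 0 := (Polynomial.isRoot_of_mem_roots hr)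
  refine ⟨r, ⟨f, hf, hfnorm, ?_⟩, ?_⟩
  · rw [← heval r]
    exact hproot
  · simpa [dist_eq_norm] using hrlt

end
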